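/- Let ψ(x) = 1/(1 + e^{−x}), let ū > 0, let N be a positive integer, and let a₁, …, a_N be nonnegative reals. Let c > 0 be such that for every i, either aᵢ = 0 or aᵢ ≥ c. Then for every u ∈ [−ū, ū]^N: Σ_{i=1}^N (ψ′(uᵢ)·aᵢ)² ≥ c·ψ(ū)(1 − ψ(ū))²·Σ_{i=1}^N ψ(uᵢ)·aᵢ. -/

import Mathlib

/-- The sigmoid function `ψ(x) = 1/(1 + e^{-x})`. -/
noncomputable def sigmoid : ℝ → ℝ := fun x => 1 / (1 + Real.exp (-x))

lemma sigmoid_pos (x : ℝ) : 0 < sigmoid x := by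
  unfold sigmoid; positivity

lemma sigmoid_lt_one (x : ℝ) : sigmoid x < 1 := by
  unfold sigmoid
  rw [div_lt_one (by positivity)]
  linarith [Real.exp_pos (-x)]

lemma sigmoid_mono {x y : ℝ} (h : x ≤ y) : sigmoid x ≤ sigmoid y := by
  unfold sigmoid
  have := Real.exp_le_exp.2 (neg_le_neg h)
  gcongr

lemma sigmoid_neg (x : ℝ) : sigmoid (-x) = 1 - sigmoid x := by
  unfold sigmoid
  rw [neg_neg]
  have h1 : (1 : ℝ) + Real.exp x ≠ 0 := by positivity
  have h2 : (1 : ℝ) + Real.exp (-x) ≠ 0 := by positivity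
  field_simp
  rw [Real.exp_neg]
  have := (Real.exp_pos x).ne'
  field_simp
  ring

lemma sigmoid_deriv (x : ℝ) : deriv sigmoid x = sigmoid x * (1 - sigmoid x) := by
  have h : HasDerivAt (fun x : ℝ => 1 + Real.exp (-x)) (-Real.exp (-x)) x := by
    simpa using ((Real.hasDerivAt_exp (-x)).comp x (hasDerivAt_neg x)).const_add 1
  have hne : 1 + Real.exp (-x) ≠ 0 := by positivity
  have hsig : sigmoid = fun y => (1 + Real.exp (-y))⁻¹ := funext fun y => one_div _
  have h2 : HasDerivAt sigmoid (Real.exp (-x) / (1 + Real.exp (-x)) ^ 2) x := by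
    rw [hsig]
    have h3 := h.inv hne
    simp only [neg_neg] at h3
    exact h3
  rw [h2.deriv]
  unfold sigmoid
  field_simp
  ring

/-- **PL-over-`u` estimate from the proof of Lemma 3 (data hyper-cleaning).**
For `ub > 0`, nonnegative weights `a i` each of which is either `0` or at least `c > 0`,
and `u ∈ [-ub, ub]^N`, one has
`Σᵢ (ψ'(uᵢ) aᵢ)² ≥ c ψ(ub)(1 - ψ(ub))² Σᵢ ψ(uᵢ) aᵢ`. -/
theorem stmt_8 (ub : ℝ) (hub : 0 < ub) (N : ℕ) (hN : 0 < N)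
    (a : Fin N → ℝ) (ha : ∀ i, 0 ≤ a i)
    (c : ℝ) (hc : 0 < c) (hca : ∀ i, a i = 0 ∨ c ≤ a i)
    (u : Fin N → ℝ) (hu : ∀ i, u i ∈ Set.Icc (-ub) ub) :
    c * sigmoid ub * (1 - sigmoid ub) ^ 2 * ∑ i, sigmoid (u i) * a i ≤
      ∑ i, (deriv sigmoid (u i) * a i) ^ 2 := by
  rw [Finset.mul_sum]
  apply Finset.sum_le_sum
  intro i _
  rw [sigmoid_deriv]
  rcases hca i with h0 | hcle
  · simp [h0]
  set s := sigmoid ub with hs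
  set t := sigmoid (u i) with ht
  have hsx : 0 < s := sigmoid_pos ub
  have hs1 : s < 1 := sigmoid_lt_one ub
  have htpos : 0 < t := sigmoid_pos (u i)
  have ht1 : t < 1 := sigmoid_lt_one (u i)
  have hts : t ≤ s := sigmoid_mono (hu i).2
  have hls : 1 - s ≤ t := by
    have := sigmoid_mono (hu i).1
    rwa [sigmoid_neg] at this
  have h1 : s * (1 - s) ≤ t * (1 - t) := by nlinarith
  have hA : 0 < a i := lt_of_lt_of_le hc hcle
  have h2 : c * a i ≤ a i * a i := by nlinarith
  have h4 : s * (1 - s) * (1 - s) ≤ t * (1 - t) * (1 - t) :=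
    mul_le_mul h1 (by linarith) (by linarith) (by nlinarith)
  have h3 : s * (1 - s) ^ 2 * t ≤ (t * (1 - t)) ^ 2 := by
    nlinarith [mul_le_mul_of_nonneg_left h4 htpos.le]
  calc c * s * (1 - s) ^ 2 * (t * a i)
      = (s * (1 - s) ^ 2 * t) * (c * a i) := by ring
    _ ≤ (t * (1 - t)) ^ 2 * (a i * a i) := by
        apply mul_le_mul h3 h2 (by positivity) (by positivity)
    _ = (t * (1 - t) * a i) ^ 2 := by ring
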